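/- For every n ∈ ℤ³ with n₃ ≠ 0 and every fixed (k₁, k₂) ∈ ℤ², there are at most 8 values of k₃ ∈ ℤ such that the triple (k, n−k) satisfies the resonance relation σ₁·k₃/|k| + σ₂·(n₃−k₃)/|n−k| = σ₃·n₃/|n| for some σ ∈ {±1}³ (with k₃ ≠ 0 ≠ n₃ − k₃). Consequently, for each n with n₃ ≠ 0 the number of resonant pairs (k, n−k) with |k| ≤ L is O(L²). -/

import Mathlib

/-- Euclidean norm of an integer vector in ℤ³. -/
noncomputable def nrm (v : Fin 3 → ℤ) : ℝ :=
  Real.sqrt (((v 0 : ℝ)) ^ 2 + ((v 1 : ℝ)) ^ 2 + ((v 2 : ℝ)) ^ 2)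

/-- The resonance relation for the pair (k, n − k):
σ₁·k₃/|k| + σ₂·(n₃−k₃)/|n−k| = σ₃·n₃/|n| for some σ ∈ {±1}³. -/
noncomputable def Res (n k : Fin 3 → ℤ) : Prop :=
  ∃ σ₁ σ₂ σ₃ : ℝ, (σ₁ = 1 ∨ σ₁ = -1) ∧ (σ₂ = 1 ∨ σ₂ = -1) ∧ (σ₃ = 1 ∨ σ₃ = -1) ∧
    σ₁ * (k 2 : ℝ) / nrm k + σ₂ * ((n 2 - k 2 : ℤ) : ℝ) / nrm (n - k)
      = σ₃ * (n 2 : ℝ) / nrm n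

lemma alg (x y z a m c K M N : ℝ) (hxyz : x + y = z)
    (hx : x^2*K = a^2) (hy : y^2*M = m^2) (hz : z^2*N = c^2) :
    (c^2*K*M - a^2*M*N - m^2*K*N)^2 - 4*a^2*m^2*K*M*N^2 = 0 := by
  have key : (z^2-x^2-y^2)^2 - 4*(x*y)^2 = 0 := by rw [← hxyz]; ring
  rw [← hx, ← hy, ← hz]
  linear_combination (K*M*N)^2 * key

open Polynomial in
lemma key_finset (n : Fin 3 → ℤ) (hn : n 2 ≠ 0) (k₁ k₂ : ℤ) :
    ∃ F : Finset ℤ, F.card ≤ 8 ∧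
      ∀ k₃ : ℤ, k₃ ≠ 0 → n 2 - k₃ ≠ 0 → Res n ![k₁, k₂, k₃] → k₃ ∈ F := by
  set A : ℤ := k₁^2 + k₂^2 with hA
  set B : ℤ := (n 0 - k₁)^2 + (n 1 - k₂)^2 with hB
  set c : ℤ := n 2 with hc
  set Nv : ℤ := (n 0)^2 + (n 1)^2 + c^2 with hNv
  set p : ℤ[X] := (C (c^2) * (C A + X^2) * (C B + (C c - X)^2) - X^2 * (C B + (C c - X)^2) * C Nv
      - (C c - X)^2 * (C A + X^2) * C Nv)^2
      - C 4 * X^2 * (C c - X)^2 * (C A + X^2) * (C B + (C c - X)^2) * C (Nv^2) with hp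
  have hdeg : p.natDegree = 8 := by
    rw [hp]
    compute_degree!
    have hc2 : 0 < c^2 := by positivity
    nlinarith [sq_nonneg (n 0), sq_nonneg (n 1)]
  have hp0 : p ≠ 0 := by
    intro h; rw [h] at hdeg; simp at hdeg
  refine ⟨p.roots.toFinset, ?_, ?_⟩
  · calc p.roots.toFinset.card ≤ Multiset.card p.roots := Multiset.toFinset_card_le _
      _ ≤ p.natDegree := p.card_roots'
      _ = 8 := hdeg
  · intro a ha hca hres
    rw [Multiset.mem_toFinset, mem_roots hp0]
    obtain ⟨σ₁, σ₂, σ₃, h1, h2, h3, heq⟩ := hres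
    -- unfold norms
    have e1 : nrm ![k₁, k₂, a] = Real.sqrt ((A:ℝ) + (a:ℝ)^2) := by
      rw [nrm]
      simp only [Matrix.cons_val_zero, Matrix.cons_val_one, Matrix.head_cons,
        Matrix.cons_val_two, Matrix.tail_cons]
      push_cast [hA]; ring_nf
    have e2 : nrm (n - ![k₁, k₂, a]) = Real.sqrt ((B:ℝ) + ((c:ℝ) - a)^2) := by
      rw [nrm]
      simp only [Pi.sub_apply, Matrix.cons_val_zero, Matrix.cons_val_one, Matrix.head_cons,
        Matrix.cons_val_two, Matrix.tail_cons]
      push_cast [hB, hc]; ring_nf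
    have e3 : nrm n = Real.sqrt (Nv:ℝ) := by
      rw [nrm]; push_cast [hNv]; ring_nf; rw [hc]
    simp only [Matrix.cons_val_zero, Matrix.cons_val_one, Matrix.head_cons,
      Matrix.cons_val_two, Matrix.tail_cons, e1, e2, e3, ← hc] at heq
    push_cast at heq
    have hK : (0:ℝ) < (A:ℝ) + (a:ℝ)^2 := by
      have : (a:ℝ) ≠ 0 := Int.cast_ne_zero.mpr ha
      have hA0 : (0:ℝ) ≤ (A:ℝ) := by rw [hA]; push_cast; positivity
      positivity
    have hM : (0:ℝ) < (B:ℝ) + ((c:ℝ) - a)^2 := by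
      have : (c:ℝ) - a ≠ 0 := by
        have h' : ((c - a : ℤ) : ℝ) ≠ 0 := Int.cast_ne_zero.mpr hca
        push_cast at h'; exact h'
      have hB0 : (0:ℝ) ≤ (B:ℝ) := by rw [hB]; push_cast; positivity
      positivity
    have hNr : (0:ℝ) < (Nv:ℝ) := by
      have : (c:ℝ) ≠ 0 := Int.cast_ne_zero.mpr (by rw [hc]; exact hn)
      rw [hNv]; push_cast; positivity
    set K : ℝ := (A:ℝ) + (a:ℝ)^2
    set M : ℝ := (B:ℝ) + ((c:ℝ) - a)^2
    have hsK : Real.sqrt K ≠ 0 := by positivity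
    have hsM : Real.sqrt M ≠ 0 := by positivity
    have hsN : Real.sqrt (Nv:ℝ) ≠ 0 := by positivity
    set x : ℝ := σ₁ * a / Real.sqrt K with hx
    set y : ℝ := σ₂ * ((c:ℝ) - a) / Real.sqrt M with hy
    set z : ℝ := σ₃ * c / Real.sqrt (Nv:ℝ) with hz
    have hxyz : x + y = z := by
      rw [hx, hy, hz]
      convert heq using 3
    have s1 : σ₁^2 = 1 := by rcases h1 with h | h <;> rw [h] <;> ring
    have s2 : σ₂^2 = 1 := by rcases h2 with h | h <;> rw [h] <;> ring
    have s3 : σ₃^2 = 1 := by rcases h3 with h | h <;> rw [h] <;> ring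
    have hx2 : x^2 * K = (a:ℝ)^2 := by
      rw [hx, div_pow, Real.sq_sqrt hK.le, div_mul_cancel₀ _ (ne_of_gt hK), mul_pow, s1, one_mul]
    have hy2 : y^2 * M = ((c:ℝ) - a)^2 := by
      rw [hy, div_pow, Real.sq_sqrt hM.le, div_mul_cancel₀ _ (ne_of_gt hM), mul_pow, s2, one_mul]
    have hz2 : z^2 * (Nv:ℝ) = (c:ℝ)^2 := by
      rw [hz, div_pow, Real.sq_sqrt hNr.le, div_mul_cancel₀ _ (ne_of_gt hNr), mul_pow, s3, one_mul]
    have main := alg x y z (a:ℝ) ((c:ℝ) - a) (c:ℝ) K M (Nv:ℝ) hxyz hx2 hy2 hz2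
    have hint : ((c^2*(A+a^2)*(B+(c-a)^2) - a^2*(B+(c-a)^2)*Nv - (c-a)^2*(A+a^2)*Nv)^2
        - 4*a^2*(c-a)^2*(A+a^2)*(B+(c-a)^2)*Nv^2 : ℤ) = 0 := by
      have : (((c^2*(A+a^2)*(B+(c-a)^2) - a^2*(B+(c-a)^2)*Nv - (c-a)^2*(A+a^2)*Nv)^2
        - 4*a^2*(c-a)^2*(A+a^2)*(B+(c-a)^2)*Nv^2 : ℤ) : ℝ) = 0 := by
        push_cast
        linear_combination main
      exact_mod_cast this
    show p.IsRoot a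
    rw [hp]
    simp only [IsRoot, eval_sub, eval_mul, eval_add, eval_pow, eval_C, eval_X, eval_ofNat]
    linear_combination hint

/-- For n₃ ≠ 0 and fixed (k₁, k₂), at most 8 values of k₃ give a resonant pair; hence for
each such n the number of resonant pairs (k, n−k) with |k| ≤ L is O(L²). -/
theorem resonant_fiber_bound :
    (∀ n : Fin 3 → ℤ, n 2 ≠ 0 → ∀ k₁ k₂ : ℤ,
      Set.ncard {k₃ : ℤ | k₃ ≠ 0 ∧ n 2 - k₃ ≠ 0 ∧ Res n ![k₁, k₂, k₃]} ≤ 8) ∧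
    ∃ C : ℝ, 0 < C ∧ ∀ L : ℝ, 1 ≤ L → ∀ n : Fin 3 → ℤ, n 2 ≠ 0 →
      ((Set.ncard {k : Fin 3 → ℤ |
          k 2 ≠ 0 ∧ n 2 - k 2 ≠ 0 ∧ nrm k ≤ L ∧ Res n k}) : ℝ) ≤ C * L ^ 2 := by
  have part1 : ∀ n : Fin 3 → ℤ, n 2 ≠ 0 → ∀ k₁ k₂ : ℤ,
      Set.ncard {k₃ : ℤ | k₃ ≠ 0 ∧ n 2 - k₃ ≠ 0 ∧ Res n ![k₁, k₂, k₃]} ≤ 8 := by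
    intro n hn k₁ k₂
    obtain ⟨F, hF8, hFmem⟩ := key_finset n hn k₁ k₂
    have hsub : {k₃ : ℤ | k₃ ≠ 0 ∧ n 2 - k₃ ≠ 0 ∧ Res n ![k₁, k₂, k₃]} ⊆ ↑F := by
      rintro a ⟨h1, h2, h3⟩; exact hFmem a h1 h2 h3
    calc Set.ncard {k₃ : ℤ | k₃ ≠ 0 ∧ n 2 - k₃ ≠ 0 ∧ Res n ![k₁, k₂, k₃]}
        ≤ Set.ncard (↑F : Set ℤ) := Set.ncard_le_ncard hsub F.finite_toSet
      _ = F.card := Set.ncard_coe_finset F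
      _ ≤ 8 := hF8
  refine ⟨part1, 72, by norm_num, ?_⟩
  intro L hL n hn
  -- choose the fiber Finsets
  have hex : ∀ k₁ k₂ : ℤ, ∃ F : Finset ℤ, F.card ≤ 8 ∧
      ∀ k₃ : ℤ, k₃ ≠ 0 → n 2 - k₃ ≠ 0 → Res n ![k₁, k₂, k₃] → k₃ ∈ F :=
    fun k₁ k₂ => key_finset n hn k₁ k₂
  choose Fc hFc1 hFc2 using hex
  set B : Finset ℤ := Finset.Icc (-⌊L⌋) ⌊L⌋ with hBdef
  set T : Finset (Fin 3 → ℤ) :=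
    (B ×ˢ B).biUnion (fun pq => (Fc pq.1 pq.2).image (fun a => ![pq.1, pq.2, a])) with hT
  have hsub : {k : Fin 3 → ℤ | k 2 ≠ 0 ∧ n 2 - k 2 ≠ 0 ∧ nrm k ≤ L ∧ Res n k} ⊆ ↑T := by
    rintro k ⟨h1, h2, h3, h4⟩
    have hk : k = ![k 0, k 1, k 2] := by
      funext i; fin_cases i <;> simp
    have hnn : (0:ℝ) ≤ ((k 0:ℝ))^2 + ((k 1:ℝ))^2 + ((k 2:ℝ))^2 := by positivity
    have hbound : ∀ i : Fin 3, ((k i:ℝ))^2 ≤ ((k 0:ℝ))^2 + ((k 1:ℝ))^2 + ((k 2:ℝ))^2 := by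
      intro i; fin_cases i <;> (try simp) <;>
        nlinarith [sq_nonneg ((k 0 : ℝ)), sq_nonneg ((k 1 : ℝ)), sq_nonneg ((k 2 : ℝ))]
    have habs : ∀ i : Fin 3, k i ∈ B := by
      intro i
      have h5 : |(k i : ℝ)| ≤ L := by
        rw [← Real.sqrt_sq_eq_abs]
        calc Real.sqrt ((k i:ℝ)^2) ≤ Real.sqrt (((k 0:ℝ))^2 + ((k 1:ℝ))^2 + ((k 2:ℝ))^2) :=
              Real.sqrt_le_sqrt (hbound i)
          _ ≤ L := h3
      have h6 : |k i| ≤ ⌊L⌋ := by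
        rw [Int.le_floor]; push_cast; exact h5
      rw [hBdef, Finset.mem_Icc]
      constructor
      · linarith [(abs_le.mp h6).1]
      · exact (abs_le.mp h6).2
    rw [Finset.mem_coe, hT, Finset.mem_biUnion]
    refine ⟨(k 0, k 1), Finset.mem_product.mpr ⟨habs 0, habs 1⟩, ?_⟩
    rw [Finset.mem_image]
    exact ⟨k 2, hFc2 (k 0) (k 1) (k 2) h1 h2 (hk ▸ h4), (hk).symm⟩
  have hTcard : T.card ≤ B.card * B.card * 8 := by
    calc T.card ≤ ∑ pq ∈ B ×ˢ B, ((Fc pq.1 pq.2).image (fun a => ![pq.1, pq.2, a])).card :=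
          Finset.card_biUnion_le
      _ ≤ ∑ pq ∈ B ×ˢ B, 8 := by
          apply Finset.sum_le_sum
          intro pq _
          exact le_trans (Finset.card_image_le) (hFc1 pq.1 pq.2)
      _ = B.card * B.card * 8 := by rw [Finset.sum_const, Finset.card_product]; ring
  have hncard : Set.ncard {k : Fin 3 → ℤ | k 2 ≠ 0 ∧ n 2 - k 2 ≠ 0 ∧ nrm k ≤ L ∧ Res n k}
      ≤ B.card * B.card * 8 := by
    calc Set.ncard {k : Fin 3 → ℤ | k 2 ≠ 0 ∧ n 2 - k 2 ≠ 0 ∧ nrm k ≤ L ∧ Res n k}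
        ≤ Set.ncard (↑T : Set (Fin 3 → ℤ)) := Set.ncard_le_ncard hsub T.finite_toSet
      _ = T.card := Set.ncard_coe_finset T
      _ ≤ B.card * B.card * 8 := hTcard
  have hBcard : (B.card : ℝ) ≤ 3 * L := by
    have h1 : B.card = (⌊L⌋ + 1 - (-⌊L⌋)).toNat := Int.card_Icc _ _
    have hfl : (1:ℤ) ≤ ⌊L⌋ := by rwa [Int.le_floor, Int.cast_one]
    have hpos : (0:ℤ) ≤ ⌊L⌋ + 1 - (-⌊L⌋) := by linarith
    have h2 : ((⌊L⌋ + 1 - (-⌊L⌋)).toNat : ℤ) = 2 * ⌊L⌋ + 1 := by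
      rw [Int.toNat_of_nonneg hpos]; ring
    have h3 : (B.card : ℝ) = 2 * (⌊L⌋ : ℝ) + 1 := by
      rw [h1]
      exact_mod_cast congrArg (fun z : ℤ => (z : ℝ)) h2
    rw [h3]
    have := Int.floor_le L
    linarith
  have hBnn : (0:ℝ) ≤ (B.card : ℝ) := Nat.cast_nonneg _
  calc ((Set.ncard {k : Fin 3 → ℤ | k 2 ≠ 0 ∧ n 2 - k 2 ≠ 0 ∧ nrm k ≤ L ∧ Res n k}) : ℝ)
      ≤ ((B.card * B.card * 8 : ℕ) : ℝ) := by exact_mod_cast hncard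
    _ = (B.card : ℝ) * (B.card : ℝ) * 8 := by push_cast; ring
    _ ≤ (3 * L) * (3 * L) * 8 := by
        apply mul_le_mul_of_nonneg_right _ (by norm_num)
        exact mul_le_mul hBcard hBcard hBnn (by linarith)
    _ = 72 * L ^ 2 := by ring
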